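/- arXiv:2402.02314 — 2 statements merged into one kernel-verified Lean document; each statement's English description precedes it below -/
import Mathlib

section
/- Let B, E, D_l, β be positive reals and define g(x) = log(B/(D_l + exp(βx)) + E). Then the second derivative g′′(x) is negative for 0 < x < x₀ and positive for x > x₀, where x₀ = log(D_l² + B·D_l/E)/(2β), provided x₀ > 0. -/
open Real

lemma first_deriv (B E Dl β : ℝ) (hB : 0 < B) (hE : 0 < E) (hDl : 0 < Dl) :
    deriv (fun x => Real.log (B / (Dl + Real.exp (β * x)) + E)) =
      fun x => -(B * β * Real.exp (β * x)) /
        ((Dl + Real.exp (β * x)) * (B + E * (Dl + Real.exp (β * x)))) := by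
  funext x
  have hDpos : 0 < Dl + Real.exp (β * x) := by positivity
  have hDne : Dl + Real.exp (β * x) ≠ 0 := ne_of_gt hDpos
  have hu : HasDerivAt (fun x : ℝ => Real.exp (β * x)) (Real.exp (β * x) * (β * 1)) x :=
    ((hasDerivAt_id x).const_mul β).exp
  have hD : HasDerivAt (fun x : ℝ => Dl + Real.exp (β * x)) (Real.exp (β * x) * (β * 1)) x :=
    hu.const_add Dl
  have hq : HasDerivAt (fun x : ℝ => B / (Dl + Real.exp (β * x)))
      ((0 * (Dl + Real.exp (β * x)) - B * (Real.exp (β * x) * (β * 1))) /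
        (Dl + Real.exp (β * x)) ^ 2) x :=
    (hasDerivAt_const x B).div hD hDne
  have hf : HasDerivAt (fun x : ℝ => B / (Dl + Real.exp (β * x)) + E)
      ((0 * (Dl + Real.exp (β * x)) - B * (Real.exp (β * x) * (β * 1))) /
        (Dl + Real.exp (β * x)) ^ 2) x := hq.add_const E
  have hfpos : 0 < B / (Dl + Real.exp (β * x)) + E := by positivity
  have hg := hf.log (ne_of_gt hfpos)
  rw [hg.deriv]
  have hBE : 0 < B + E * (Dl + Real.exp (β * x)) := by positivity
  field_simp
  ring

theorem stmt_5 (B E Dl β : ℝ) (hB : 0 < B) (hE : 0 < E) (hDl : 0 < Dl) (hβ : 0 < β)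
    (x₀ : ℝ) (hx₀ : x₀ = Real.log (Dl ^ 2 + B * Dl / E) / (2 * β)) (hx₀pos : 0 < x₀) :
    ∀ x : ℝ,
      (0 < x → x < x₀ →
        deriv (deriv (fun x => Real.log (B / (Dl + Real.exp (β * x)) + E))) x < 0) ∧
      (x₀ < x →
        0 < deriv (deriv (fun x => Real.log (B / (Dl + Real.exp (β * x)) + E))) x) := by
  have hthr : Real.exp (2 * β * x₀) = Dl ^ 2 + B * Dl / E := by
    have hpos : 0 < Dl ^ 2 + B * Dl / E := by positivity
    have : 2 * β * x₀ = Real.log (Dl ^ 2 + B * Dl / E) := by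
      rw [hx₀]; field_simp
    rw [this, Real.exp_log hpos]
  have key : ∀ x : ℝ,
      deriv (deriv (fun x => Real.log (B / (Dl + Real.exp (β * x)) + E))) x =
        B * β ^ 2 * Real.exp (β * x) * (E * (Real.exp (2 * β * x) - Real.exp (2 * β * x₀))) /
          ((Dl + Real.exp (β * x)) * (B + E * (Dl + Real.exp (β * x)))) ^ 2 := by
    intro x
    rw [first_deriv B E Dl β hB hE hDl]
    have hDpos : 0 < Dl + Real.exp (β * x) := by positivity
    have hBE : 0 < B + E * (Dl + Real.exp (β * x)) := by positivity
    have hMne : (Dl + Real.exp (β * x)) * (B + E * (Dl + Real.exp (β * x))) ≠ 0 := by positivity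
    have hu : HasDerivAt (fun x : ℝ => Real.exp (β * x)) (Real.exp (β * x) * (β * 1)) x :=
      ((hasDerivAt_id x).const_mul β).exp
    have hD : HasDerivAt (fun x : ℝ => Dl + Real.exp (β * x)) (Real.exp (β * x) * (β * 1)) x :=
      hu.const_add Dl
    have hN : HasDerivAt (fun x : ℝ => -(B * β * Real.exp (β * x)))
        (-(B * β * (Real.exp (β * x) * (β * 1)))) x := ((hu.const_mul (B * β))).neg
    have hM : HasDerivAt
        (fun x : ℝ => (Dl + Real.exp (β * x)) * (B + E * (Dl + Real.exp (β * x))))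
        (Real.exp (β * x) * (β * 1) * (B + E * (Dl + Real.exp (β * x))) +
          (Dl + Real.exp (β * x)) * (E * (Real.exp (β * x) * (β * 1)))) x :=
      hD.mul ((hD.const_mul E).const_add B)
    have hg : HasDerivAt (fun x : ℝ => -(B * β * Real.exp (β * x)) /
        ((Dl + Real.exp (β * x)) * (B + E * (Dl + Real.exp (β * x))))) _ x := hN.div hM hMne
    rw [hg.deriv]
    rw [div_eq_div_iff (by positivity) (by positivity)]
    have hsq : Real.exp (2 * β * x) = Real.exp (β * x) * Real.exp (β * x) := by
      rw [← Real.exp_add]; ring_nf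
    rw [hthr, hsq]
    field_simp
    ring
  intro x
  have hDpos : 0 < Dl + Real.exp (β * x) := by positivity
  have hden : (0:ℝ) < ((Dl + Real.exp (β * x)) * (B + E * (Dl + Real.exp (β * x)))) ^ 2 := by
    positivity
  constructor
  · intro _ hlt
    rw [key x]
    apply div_neg_of_neg_of_pos _ hden
    have : Real.exp (2 * β * x) < Real.exp (2 * β * x₀) :=
      Real.exp_lt_exp.mpr (by nlinarith)
    have h1 : E * (Real.exp (2 * β * x) - Real.exp (2 * β * x₀)) < 0 := by nlinarith
    have h2 : 0 < B * β ^ 2 * Real.exp (β * x) := by positivity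
    nlinarith
  · intro hgt
    rw [key x]
    apply div_pos _ hden
    have : Real.exp (2 * β * x₀) < Real.exp (2 * β * x) :=
      Real.exp_lt_exp.mpr (by nlinarith)
    have h1 : 0 < E * (Real.exp (2 * β * x) - Real.exp (2 * β * x₀)) := by nlinarith
    have h2 : 0 < B * β ^ 2 * Real.exp (β * x) := by positivity
    nlinarith
end

section
/- Let B, E, D_l, β > 0 and g(x) = log(B/(D_l + exp(βx)) + E). If D_l² + B·D_l/E > 1, then there exists a point x₀ > 0 at which g changes from strictly concave to strictly convex; in particular g is not convex on (0, ∞). -/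
open Real Set

theorem stmt_17 (B E Dl β : ℝ) (hB : 0 < B) (hE : 0 < E) (hDl : 0 < Dl) (hβ : 0 < β)
    (hcond : 1 < Dl ^ 2 + B * Dl / E) :
    ∃ x₀ : ℝ, 0 < x₀ ∧
      StrictConcaveOn ℝ (Set.Ioo 0 x₀)
        (fun x : ℝ => Real.log (B / (Dl + Real.exp (β * x)) + E)) ∧
      StrictConvexOn ℝ (Set.Ioi x₀)
        (fun x : ℝ => Real.log (B / (Dl + Real.exp (β * x)) + E)) ∧
      ¬ ConvexOn ℝ (Set.Ioi 0)
        (fun x : ℝ => Real.log (B / (Dl + Real.exp (β * x)) + E)) := by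
  set C1 : ℝ := B + E * Dl with hC1
  have hC1pos : 0 < C1 := by positivity
  set K : ℝ := Dl ^ 2 + B * Dl / E with hK
  have hKpos : 0 < K := by positivity
  have hK1 : 1 < K := hcond
  have hEK : E * K = Dl * C1 := by
    have hdm : B * Dl / E * E = B * Dl := div_mul_cancel₀ _ hE.ne'
    rw [hK, hC1]; linear_combination hdm
  set x₀ : ℝ := Real.log K / (2 * β) with hx₀
  have hx₀pos : 0 < x₀ := by
    apply div_pos (Real.log_pos hK1) (by positivity)
  -- denominators positive
  have hden1 : ∀ x : ℝ, 0 < E * Real.exp (β * x) + C1 := fun x => by positivity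
  have hden2 : ∀ x : ℝ, 0 < Real.exp (β * x) + Dl := fun x => by positivity
  -- rewrite the function
  set g0 : ℝ → ℝ := fun x => Real.log (E * Real.exp (β * x) + C1) - Real.log (Real.exp (β * x) + Dl) with hg0
  have hfun : (fun x : ℝ => Real.log (B / (Dl + Real.exp (β * x)) + E)) = g0 := by
    funext x
    have hd : (0:ℝ) < Dl + Real.exp (β * x) := by positivity
    have : B / (Dl + Real.exp (β * x)) + E
        = (E * Real.exp (β * x) + C1) / (Real.exp (β * x) + Dl) := by
      field_simp [hC1]; ring
    rw [this, Real.log_div (hden1 x).ne' (hden2 x).ne']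
  -- derivative of exp (β x)
  have hu : ∀ x : ℝ, HasDerivAt (fun x => Real.exp (β * x)) (Real.exp (β * x) * β) x := by
    intro x
    simpa using ((hasDerivAt_id x).const_mul β).exp
  -- first derivative
  set f1 : ℝ → ℝ := fun x =>
    E * (Real.exp (β * x) * β) / (E * Real.exp (β * x) + C1)
      - Real.exp (β * x) * β / (Real.exp (β * x) + Dl) with hf1
  have hd1 : ∀ x : ℝ, HasDerivAt g0 (f1 x) x := by
    intro x
    have h1 : HasDerivAt (fun x => Real.log (E * Real.exp (β * x) + C1))
        (E * (Real.exp (β * x) * β) / (E * Real.exp (β * x) + C1)) x :=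
      (((hu x).const_mul E).add_const C1).log (hden1 x).ne'
    have h2 : HasDerivAt (fun x => Real.log (Real.exp (β * x) + Dl))
        (Real.exp (β * x) * β / (Real.exp (β * x) + Dl)) x :=
      ((hu x).add_const Dl).log (hden2 x).ne'
    exact h1.sub h2
  -- second derivative
  set f2 : ℝ → ℝ := fun x =>
    (E * (Real.exp (β * x) * β * β) * (E * Real.exp (β * x) + C1)
        - E * (Real.exp (β * x) * β) * (E * (Real.exp (β * x) * β)))
      / (E * Real.exp (β * x) + C1) ^ 2
    - ((Real.exp (β * x) * β * β) * (Real.exp (β * x) + Dl)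
        - Real.exp (β * x) * β * (Real.exp (β * x) * β))
      / (Real.exp (β * x) + Dl) ^ 2 with hf2
  have hd2 : ∀ x : ℝ, HasDerivAt f1 (f2 x) x := by
    intro x
    have hn1 : HasDerivAt (fun x => E * (Real.exp (β * x) * β))
        (E * (Real.exp (β * x) * β * β)) x := ((hu x).mul_const β).const_mul E
    have hden1' : HasDerivAt (fun x => E * Real.exp (β * x) + C1)
        (E * (Real.exp (β * x) * β)) x := ((hu x).const_mul E).add_const C1
    have hn2 : HasDerivAt (fun x => Real.exp (β * x) * β)
        (Real.exp (β * x) * β * β) x := (hu x).mul_const β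
    have hden2' : HasDerivAt (fun x => Real.exp (β * x) + Dl)
        (Real.exp (β * x) * β) x := (hu x).add_const Dl
    exact (hn1.div hden1' (hden1 x).ne').sub (hn2.div hden2' (hden2 x).ne')
  have hderiv2 : deriv^[2] g0 = f2 := by
    have h1 : deriv g0 = f1 := funext fun x => (hd1 x).deriv
    show deriv (deriv g0) = f2
    rw [h1]
    exact funext fun x => (hd2 x).deriv
  -- closed form of f2
  have hf2eq : ∀ x : ℝ, f2 x =
      β ^ 2 * Real.exp (β * x) * B * E * (Real.exp (β * x) ^ 2 - K)
        / ((E * Real.exp (β * x) + C1) ^ 2 * (Real.exp (β * x) + Dl) ^ 2) := by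
    intro x
    have h1 := (hden1 x).ne'
    have h2 := (hden2 x).ne'
    rw [hf2, hK, hC1]
    field_simp
    ring
  -- continuity of g0
  have hc0 : Continuous fun x : ℝ => Real.exp (β * x) := by continuity
  have hcont : Continuous g0 := by
    apply Continuous.sub
    · exact ((continuous_const.mul hc0).add continuous_const).log fun x => (hden1 x).ne'
    · exact (hc0.add continuous_const).log fun x => (hden2 x).ne'
  -- sign analysis
  have hsq : ∀ x : ℝ, Real.exp (β * x) ^ 2 = Real.exp (2 * (β * x)) := by
    intro x; rw [sq, ← Real.exp_add]; ring_nf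
  have hconc : StrictConcaveOn ℝ (Set.Ioo 0 x₀) g0 := by
    apply strictConcaveOn_of_deriv2_neg (convex_Ioo 0 x₀) hcont.continuousOn
    intro x hx
    rw [interior_Ioo] at hx
    rw [hderiv2, hf2eq]
    apply div_neg_of_neg_of_pos
    · have hlt : Real.exp (β * x) ^ 2 < K := by
        rw [hsq, ← Real.exp_log hKpos]
        apply Real.exp_lt_exp.2
        have := hx.2
        rw [hx₀, lt_div_iff₀ (by positivity : (0:ℝ) < 2 * β)] at this
        nlinarith
      have : Real.exp (β * x) ^ 2 - K < 0 := by linarith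
      have h0 : 0 < β ^ 2 * Real.exp (β * x) * B * E := by positivity
      nlinarith
    · positivity
  have hconv : StrictConvexOn ℝ (Set.Ioi x₀) g0 := by
    apply strictConvexOn_of_deriv2_pos (convex_Ioi x₀) hcont.continuousOn
    intro x hx
    rw [interior_Ioi] at hx
    rw [hderiv2, hf2eq]
    apply div_pos
    · have hlt : K < Real.exp (β * x) ^ 2 := by
        rw [hsq, ← Real.exp_log hKpos]
        apply Real.exp_lt_exp.2
        have : x₀ < x := hx
        rw [hx₀, div_lt_iff₀ (by positivity : (0:ℝ) < 2 * β)] at this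
        nlinarith
      have h0 : 0 < β ^ 2 * Real.exp (β * x) * B * E := by positivity
      nlinarith
    · positivity
  refine ⟨x₀, hx₀pos, ?_, ?_, ?_⟩
  · rw [hfun]; exact hconc
  · rw [hfun]; exact hconv
  · rw [hfun]
    intro hc
    set a : ℝ := x₀ / 4
    set b : ℝ := x₀ / 2
    have ha : a ∈ Set.Ioo (0:ℝ) x₀ := ⟨by positivity, by simp only [a]; linarith⟩
    have hb : b ∈ Set.Ioo (0:ℝ) x₀ := ⟨by positivity, by simp only [b]; linarith⟩
    have hab : a ≠ b := by
      simp only [a, b]; intro h; nlinarith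
    have h1 := hconc.2 ha hb hab (by norm_num : (0:ℝ) < 1/2)
      (by norm_num : (0:ℝ) < 1/2) (by norm_num)
    have h2 := hc.2 (Set.mem_Ioi.2 ha.1) (Set.mem_Ioi.2 hb.1)
      (by norm_num : (0:ℝ) ≤ 1/2) (by norm_num : (0:ℝ) ≤ 1/2) (by norm_num)
    simp only [smul_eq_mul] at h1 h2
    linarith
end
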